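/- For any conservative paging strategy X, any request sequence r, and any k: m(k,r) ≤ 2k · cost_OPT(k,r) / cost_X(k,r). -/

import Mathlib

/-- Length of the maximal prefix of `r` containing at most `k` distinct items. -/
def maxPrefixLen {α : Type*} [DecidableEq α] (k : ℕ) (r : List α) : ℕ :=
  ((List.range (r.length + 1)).filter (fun n => (r.take n).dedup.length ≤ k)).foldr max 0

/-- Greedy phase partition, with fuel for termination. -/
def phasesAux {α : Type*} [DecidableEq α] (k : ℕ) : ℕ → List α → List (List α)
  | 0, _ => []
  | _, [] => []
  | (fuel+1), r =>
      let n := max 1 (maxPrefixLen k r)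
      r.take n :: phasesAux k fuel (r.drop n)

section AuxLemmas
variable {α : Type*} [DecidableEq α] {k : ℕ} {r : List α}

lemma le_foldr_max {l : List ℕ} {a : ℕ} (h : a ∈ l) : a ≤ l.foldr max 0 := by
  induction l with
  | nil => simp at h
  | cons b t ih =>
    rcases List.mem_cons.mp h with h | h
    · subst h; exact le_max_left _ _
    · exact (ih h).trans (le_max_right _ _)

lemma foldr_max_mem (l : List ℕ) : l.foldr max 0 = 0 ∨ l.foldr max 0 ∈ l := by
  induction l with
  | nil => left; rfl
  | cons b t ih =>
    rcases le_total b (t.foldr max 0) with h | h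
    · rw [List.foldr_cons, max_eq_right h]
      rcases ih with h0 | hm
      · left; exact h0
      · right; exact List.mem_cons_of_mem _ hm
    · rw [List.foldr_cons, max_eq_left h]
      right; exact List.mem_cons_self

lemma one_le_maxPrefixLen (hk : 0 < k) (hr : r ≠ []) : 1 ≤ maxPrefixLen k r := by
  apply le_foldr_max
  rw [List.mem_filter]
  constructor
  · rw [List.mem_range]
    have := List.length_pos_iff.mpr hr
    omega
  · simp only [decide_eq_true_eq]
    cases r with
    | nil => exact absurd rfl hr
    | cons a t => simpa using Nat.one_le_iff_ne_zero.mpr hk.ne'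

lemma dedup_take_maxPrefixLen_le (hk : 0 < k) (hr : r ≠ []) :
    (r.take (maxPrefixLen k r)).dedup.length ≤ k := by
  rcases foldr_max_mem ((List.range (r.length + 1)).filter
      (fun n => (r.take n).dedup.length ≤ k)) with h0 | hm
  · have := one_le_maxPrefixLen (k := k) hk hr
    rw [maxPrefixLen] at this
    omega
  · have := (List.mem_filter.mp hm).2
    simpa [maxPrefixLen] using this

lemma maxPrefixLen_le_length : maxPrefixLen k r ≤ r.length := by
  rcases foldr_max_mem ((List.range (r.length + 1)).filter
      (fun n => (r.take n).dedup.length ≤ k)) with h0 | hm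
  · rw [maxPrefixLen, h0]; omega
  · have := (List.mem_filter.mp hm).1
    rw [List.mem_range] at this
    rw [maxPrefixLen]; omega

lemma dedup_take_succ_gt (hlt : maxPrefixLen k r < r.length) :
    k < (r.take (maxPrefixLen k r + 1)).dedup.length := by
  by_contra h
  push_neg at h
  have hmem : maxPrefixLen k r + 1 ∈ (List.range (r.length + 1)).filter
      (fun n => (r.take n).dedup.length ≤ k) := by
    rw [List.mem_filter]
    exact ⟨by rw [List.mem_range]; omega, by simpa using h⟩
  have := le_foldr_max hmem
  rw [maxPrefixLen] at *
  omega

lemma dedup_length_take_succ (n : ℕ) (hn : n < r.length) :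
    (r.take (n+1)).dedup.length ≤ (r.take n).dedup.length + 1 := by
  rw [← List.card_toFinset, ← List.card_toFinset]
  rw [List.take_succ, List.getElem?_eq_getElem hn]
  rw [List.toFinset_append]
  refine (Finset.card_union_le _ _).trans ?_
  simp

/-- Blocks invariant: each block nonempty, non-final blocks have exactly `k`
distinct items, the final block at most `k`. -/
inductive GoodBlocks (k : ℕ) : List (List α) → Prop
  | nil : GoodBlocks k []
  | single {p : List α} (h1 : p ≠ []) (h2 : p.dedup.length ≤ k) : GoodBlocks k [p]
  | cons {p q : List α} {rest : List (List α)} (h1 : p ≠ []) (h2 : p.dedup.length = k)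
      (h3 : GoodBlocks k (q :: rest)) : GoodBlocks k (p :: q :: rest)

lemma GoodBlocks.tail {l : List (List α)} {p : List α} (h : GoodBlocks k (p :: l)) :
    GoodBlocks k l := by
  cases h with
  | single h1 h2 => exact .nil
  | cons h1 h2 h3 => exact h3

lemma phasesAux_nil (k fuel : ℕ) : phasesAux (α := α) k fuel [] = [] := by
  cases fuel <;> rfl

lemma phasesAux_cons (hk : 0 < k) (hr : r ≠ []) (fuel : ℕ) :
    phasesAux k (fuel+1) r =
      r.take (maxPrefixLen k r) :: phasesAux k fuel (r.drop (maxPrefixLen k r)) := by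
  obtain ⟨x, t, rfl⟩ := List.exists_cons_of_ne_nil hr
  show (x :: t).take (max 1 (maxPrefixLen k (x :: t))) ::
      phasesAux k fuel ((x :: t).drop (max 1 (maxPrefixLen k (x :: t)))) = _
  rw [max_eq_right (one_le_maxPrefixLen hk hr)]

lemma phasesAux_join (hk : 0 < k) :
    ∀ (fuel : ℕ) (r : List α), r.length ≤ fuel → (phasesAux k fuel r).flatten = r := by
  intro fuel
  induction fuel with
  | zero =>
    intro r h
    have : r = [] := List.length_eq_zero_iff.mp (Nat.le_zero.mp h)
    subst this; rfl
  | succ f ih =>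
    intro r h
    by_cases hr : r = []
    · subst hr; rw [phasesAux_nil]; rfl
    · rw [phasesAux_cons hk hr]
      rw [List.flatten_cons, ih _ (by
        have h1 := one_le_maxPrefixLen (k := k) hk hr
        simp only [List.length_drop]
        omega)]
      exact List.take_append_drop _ _

lemma phasesAux_good (hk : 0 < k) :
    ∀ (fuel : ℕ) (r : List α), r.length ≤ fuel → GoodBlocks k (phasesAux k fuel r) := by
  intro fuel
  induction fuel with
  | zero =>
    intro r h
    have he : phasesAux (α := α) k 0 r = [] := by cases r <;> rfl
    rw [he]; exact GoodBlocks.nil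
  | succ f ih =>
    intro r h
    by_cases hr : r = []
    · subst hr; rw [phasesAux_nil]; exact GoodBlocks.nil
    · rw [phasesAux_cons hk hr]
      set n := maxPrefixLen k r with hn
      have hn1 : 1 ≤ n := one_le_maxPrefixLen hk hr
      have hrl : 1 ≤ r.length := List.length_pos_iff.mpr hr
      have hnp : r.take n ≠ [] := by
        apply List.ne_nil_of_length_pos
        rw [List.length_take]
        omega
      have hd : (r.take n).dedup.length ≤ k := dedup_take_maxPrefixLen_le hk hr
      by_cases hdr : r.drop n = []
      · rw [hdr, phasesAux_nil]
        exact .single hnp hd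
      · have hlt : n < r.length := by
          rw [List.drop_eq_nil_iff] at hdr
          omega
        have heq : (r.take n).dedup.length = k := by
          have h1 := dedup_take_succ_gt (k := k) (r := r) hlt
          have h2 := dedup_length_take_succ (r := r) n hlt
          rw [← hn] at h1
          omega
        have hrest := ih (r.drop n) (by simp only [List.length_drop]; omega)
        have hne : phasesAux k f (r.drop n) ≠ [] := by
          cases f with
          | zero =>
            exfalso
            have : (r.drop n).length ≤ 0 := by simp only [List.length_drop]; omega
            exact hdr (List.length_eq_zero_iff.mp (Nat.le_zero.mp this))
          | succ f' =>
            rw [phasesAux_cons hk hdr]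
            exact List.cons_ne_nil _ _
        obtain ⟨q, rest, hqr⟩ := List.exists_cons_of_ne_nil hne
        rw [hqr]
        rw [hqr] at hrest
        exact .cons hnp heq hrest

end AuxLemmas

/-- The `k`-phase partition of `r`: greedy maximal consecutive blocks, each
containing requests to at most `k` distinct items. -/
def phases {α : Type*} [DecidableEq α] (k : ℕ) (r : List α) : List (List α) :=
  phasesAux k r.length r

/-- `L(k,r)`: the number of `k`-phases of `r`, minus 1. -/
def numPhases {α : Type*} [DecidableEq α] (k : ℕ) (r : List α) : ℕ :=
  (phases k r).length - 1

/-- For each `k`-phase other than the first, the number of new requests: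
items requested in the phase but not in the previous phase. -/
def newCounts {α : Type*} [DecidableEq α] (k : ℕ) (r : List α) : List ℕ :=
  ((phases k r).zip (phases k r).tail).map
    (fun p => (p.2.dedup.filter (fun x => x ∉ p.1)).length)

/-- `m(k,r)`: the average number of new requests per `k`-phase (other than the first). -/
noncomputable def avgNew {α : Type*} [DecidableEq α] (k : ℕ) (r : List α) : ℝ :=
  ((newCounts k r).sum : ℝ) / (numPhases k r : ℝ)

/-- Index in `r` at which the `i`-th `k`-phase starts. -/
def phaseStart {α : Type*} [DecidableEq α] (k : ℕ) (r : List α) (i : ℕ) : ℕ :=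
  (((phases k r).take i).map List.length).sum

/-- An execution of a paging strategy with `h` servers (cache slots) on request
sequence `r`.  `cache i` is the set of items with a server just before request `i`
is served; the cache starts empty, never exceeds `h` items, contains each
requested item right after it is served, and only requested items may enter. -/
structure PagingSchedule {α : Type*} [DecidableEq α] (h : ℕ) (r : List α) where
  cache : ℕ → Finset α
  init : cache 0 = ∅
  card_le : ∀ i, (cache i).card ≤ h
  serves : ∀ i : Fin r.length, r.get i ∈ cache (i.val + 1)
  update : ∀ i : Fin r.length, cache (i.val + 1) ⊆ cache i.val ∪ {r.get i}

/-- Number of faults: requests to items not currently in the cache. -/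
def faults {α : Type*} [DecidableEq α] {h : ℕ} {r : List α} (s : PagingSchedule h r) : ℕ :=
  (Finset.univ.filter (fun i : Fin r.length => r.get i ∉ s.cache i.val)).card

/-- Cost of a schedule: each server's first placement is free, so the number of
(paid) server movements is the number of faults minus `h`. -/
def schedCost {α : Type*} [DecidableEq α] {h : ℕ} {r : List α} (s : PagingSchedule h r) : ℕ :=
  faults s - h

/-- Optimal offline paging cost with `h` servers on `r`. -/
noncomputable def costOpt {α : Type*} [DecidableEq α] (h : ℕ) (r : List α) : ℕ :=
  sInf {c | ∃ s : PagingSchedule h r, c = schedCost s}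

/-- Number of faults incurred at requests with index in `[a, b)`. -/
def windowFaults {α : Type*} [DecidableEq α] {h : ℕ} {r : List α}
    (s : PagingSchedule h r) (a b : ℕ) : ℕ :=
  (Finset.univ.filter
    (fun i : Fin r.length => a ≤ i.val ∧ i.val < b ∧ r.get i ∉ s.cache i.val)).card

/-- A schedule is conservative if it faults at most `h` times during any
consecutive subsequence of requests to at most `h` distinct items. -/
def Conservative {α : Type*} [DecidableEq α] {h : ℕ} {r : List α}
    (s : PagingSchedule h r) : Prop :=
  ∀ a b : ℕ, ((r.drop a).take (b - a)).dedup.length ≤ h → windowFaults s a b ≤ h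

section Main
variable {α : Type*} [DecidableEq α] {k : ℕ} {r : List α}

/-- number of new items in `q` relative to `p`. -/
def pairNew (p q : List α) : ℕ := (q.dedup.filter (fun x => x ∉ p)).length

def ncList : List (List α) → ℕ
  | [] => 0
  | [_] => 0
  | p :: q :: rest => pairNew p q + ncList (q :: rest)

def oddSum : List (List α) → ℕ
  | [] => 0
  | [_] => 0
  | p :: q :: rest => pairNew p q + oddSum rest

lemma newCounts_sum_eq :
    ∀ q : List (List α),
      ((q.zip q.tail).map (fun p => (p.2.dedup.filter (fun x => x ∉ p.1)).length)).sum
        = ncList q := by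
  intro q
  induction q with
  | nil => rfl
  | cons p rest ih =>
    cases rest with
    | nil => rfl
    | cons q rest' =>
      simp only [List.tail_cons, List.zip_cons_cons, List.map_cons, List.sum_cons]
      simp only [List.tail_cons] at ih
      rw [ih]
      rfl

lemma ncList_eq_odd_add (q : List (List α)) : ncList q = oddSum q + oddSum q.tail := by
  induction q with
  | nil => rfl
  | cons p rest ih =>
    cases rest with
    | nil => rfl
    | cons q rest' =>
      show pairNew p q + ncList (q :: rest') = (pairNew p q + oddSum rest') + oddSum (q :: rest')
      simp only [List.tail_cons] at ih
      rw [ih]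
      omega

lemma count_pair (p q : List α) : p.dedup.length + pairNew p q ≤ (p ++ q).toFinset.card := by
  classical
  have hsub : p.toFinset ∪ (q.dedup.filter (fun x => x ∉ p)).toFinset ⊆ (p ++ q).toFinset := by
    intro x hx
    rw [List.toFinset_append]
    rcases Finset.mem_union.mp hx with h | h
    · exact Finset.mem_union_left _ h
    · apply Finset.mem_union_right
      rw [List.mem_toFinset] at h ⊢
      exact List.mem_dedup.mp (List.mem_of_mem_filter h)
  have hdisj : Disjoint p.toFinset (q.dedup.filter (fun x => x ∉ p)).toFinset := by
    rw [Finset.disjoint_left]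
    intro x hxp hxq
    rw [List.mem_toFinset, List.mem_filter] at hxq
    rw [List.mem_toFinset] at hxp
    simp only [decide_eq_true_eq] at hxq
    exact hxq.2 hxp
  calc p.dedup.length + pairNew p q
      = p.toFinset.card + (q.dedup.filter (fun x => x ∉ p)).toFinset.card := by
        rw [List.card_toFinset, pairNew,
          List.toFinset_card_of_nodup (q.nodup_dedup.filter _)]
    _ = (p.toFinset ∪ (q.dedup.filter (fun x => x ∉ p)).toFinset).card :=
        (Finset.card_union_of_disjoint hdisj).symm
    _ ≤ (p ++ q).toFinset.card := Finset.card_le_card hsub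

lemma windowFaults_add {h : ℕ} (s : PagingSchedule h r) {a b c : ℕ} (hab : a ≤ b)
    (hbc : b ≤ c) : windowFaults s a c = windowFaults s a b + windowFaults s b c := by
  rw [windowFaults, windowFaults, windowFaults, ← Finset.card_union_of_disjoint]
  · congr 1
    ext i
    simp only [Finset.mem_union, Finset.mem_filter, Finset.mem_univ, true_and]
    by_cases hF : r.get i ∈ s.cache i.val <;> simp only [hF, not_true, not_false_iff,
      and_true, and_false, or_false, false_and, or_self, iff_false, not_and, false_iff] <;> omega
  · rw [Finset.disjoint_left]
    intro i hi hi'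
    simp only [Finset.mem_filter, Finset.mem_univ, true_and] at hi hi'
    omega

lemma faults_eq_window {h : ℕ} (s : PagingSchedule h r) :
    faults s = windowFaults s 0 r.length := by
  rw [faults, windowFaults]
  congr 1
  ext i
  simp [i.isLt]

lemma windowFaults_zero {h : ℕ} (s : PagingSchedule h r) {a b : ℕ} (ha : r.length ≤ a) :
    windowFaults s a b = 0 := by
  rw [windowFaults, Finset.card_eq_zero, Finset.filter_eq_empty_iff]
  intro i _
  have := i.isLt
  simp only [not_and]
  intro h1
  omega

lemma window_lb {h : ℕ} (s : PagingSchedule h r) (a b : ℕ) :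
    ((r.drop a).take (b - a)).toFinset.card ≤ windowFaults s a b + (s.cache a).card := by
  classical
  set w := (r.drop a).take (b - a) with hw
  by_cases hwe : w = []
  · simp [hwe]
  · have hrlen : 0 < r.length := by
      by_contra h0
      push_neg at h0
      have : r = [] := List.length_eq_zero_iff.mp (Nat.le_zero.mp h0)
      subst this
      simp [hw] at hwe
    have entry : ∀ (x : α), x ∉ s.cache a → ∀ i : ℕ, a ≤ i → i < r.length →
        x ∈ s.cache (i+1) →
        ∃ j : Fin r.length, a ≤ j.val ∧ j.val ≤ i ∧ r.get j = x ∧ x ∉ s.cache j.val := by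
      intro x hxa i
      induction i using Nat.strong_induction_on with
      | _ i IH =>
        intro hai hir hxc
        by_cases hxi : x ∈ s.cache i
        · have hia : a < i := by
            rcases Nat.lt_or_ge a i with h' | h'
            · exact h'
            · exfalso; have : i = a := by omega
              subst this; exact hxa hxi
          obtain ⟨j, h1, h2, h3, h4⟩ := IH (i-1) (by omega) (by omega) (by omega)
            (by have hh : i - 1 + 1 = i := by omega
                rw [hh]; exact hxi)
          exact ⟨j, h1, by omega, h3, h4⟩
        · have hsub := s.update ⟨i, hir⟩ hxc
          rcases Finset.mem_union.mp hsub with h' | h'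
          · exact absurd h' hxi
          · have hx : r.get ⟨i, hir⟩ = x := (Finset.mem_singleton.mp h').symm
            exact ⟨⟨i, hir⟩, hai, le_refl _, hx, hxi⟩
    have key : ∀ x ∈ w.toFinset \ s.cache a,
        ∃ j : Fin r.length, a ≤ j.val ∧ j.val < b ∧ r.get j = x ∧ r.get j ∉ s.cache j.val := by
      intro x hx
      rw [Finset.mem_sdiff, List.mem_toFinset] at hx
      obtain ⟨hxw, hxa⟩ := hx
      obtain ⟨i, hi, hix⟩ := List.mem_iff_getElem.mp hxw
      have hwl2 : w.length = min (b - a) (r.length - a) := by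
        rw [hw, List.length_take, List.length_drop]
      have hia : a + i < r.length := by omega
      have hib : a + i < b := by omega
      have hx? : w[i]? = some x := by rw [List.getElem?_eq_getElem hi, hix]
      rw [hw, List.getElem?_take_of_lt (by omega), List.getElem?_drop,
        List.getElem?_eq_getElem hia] at hx?
      have hri : r[a + i]'hia = x := Option.some_injective _ hx?
      have hserve := s.serves ⟨a + i, hia⟩
      rw [List.get_eq_getElem] at hserve
      simp only at hserve
      rw [hri] at hserve
      obtain ⟨j, h1, h2, h3, h4⟩ := entry x hxa (a + i) (by omega) hia hserve
      exact ⟨j, h1, by omega, h3, by rw [h3]; exact h4⟩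
    have hcard : (w.toFinset \ s.cache a).card ≤
        (Finset.univ.filter
          (fun i : Fin r.length => a ≤ i.val ∧ i.val < b ∧ r.get i ∉ s.cache i.val)).card := by
      apply Finset.card_le_card_of_injOn
        (fun x => if hx : ∃ j : Fin r.length,
            a ≤ j.val ∧ j.val < b ∧ r.get j = x ∧ r.get j ∉ s.cache j.val
          then hx.choose else ⟨0, hrlen⟩)
      · intro x hx
        have hP := key x hx
        simp only [dif_pos hP]
        have hspec := hP.choose_spec
        simp only [Finset.mem_coe, Finset.mem_filter, Finset.mem_univ, true_and]
        exact ⟨hspec.1, hspec.2.1, hspec.2.2.2⟩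
      · intro x hx y hy hxy
        have hPx := key x hx
        have hPy := key y hy
        simp only [dif_pos hPx, dif_pos hPy] at hxy
        have hsx := hPx.choose_spec
        have hsy := hPy.choose_spec
        rw [← hsx.2.2.1, ← hsy.2.2.1, hxy]
    have := Finset.card_le_card_sdiff_add_card (s := w.toFinset) (t := s.cache a)
    rw [windowFaults]
    omega

lemma chain_faults_le (s : PagingSchedule k r) (hcons : Conservative s) :
    ∀ (q : List (List α)), GoodBlocks k q → ∀ a, r.drop a = q.flatten →
      windowFaults s a r.length ≤ k * q.length := by
  intro q hq
  induction hq with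
  | nil =>
    intro a ha
    simp only [List.flatten_nil] at ha
    rw [List.drop_eq_nil_iff] at ha
    rw [windowFaults_zero s ha]
    simp
  | @single p h1 h2 =>
    intro a ha
    simp only [List.flatten_cons, List.flatten_nil, List.append_nil] at ha
    have halen : a ≤ r.length := by
      by_contra hc
      push_neg at hc
      rw [List.drop_eq_nil_of_le (le_of_lt hc)] at ha
      exact h1 ha.symm
    have hlen : r.length - a = p.length := by
      rw [← List.length_drop, ha]
    have hwle : windowFaults s a r.length ≤ k := by
      apply hcons
      rw [hlen, ha, List.take_length]
      exact h2
    simpa using hwle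
  | @cons p q rest h1 h2 h3 ih =>
    intro a ha
    rw [List.flatten_cons] at ha
    have halen : a < r.length := by
      by_contra hc
      push_neg at hc
      rw [List.drop_eq_nil_of_le hc] at ha
      exact h1 (List.append_eq_nil_iff.mp ha.symm).1
    have hlen : r.length - a = p.length + (q :: rest).flatten.length := by
      rw [← List.length_drop, ha, List.length_append]
    have hble : a + p.length ≤ r.length := by omega
    have hdb : r.drop (a + p.length) = (q :: rest).flatten := by
      rw [← List.drop_drop, ha, List.drop_left]
    rw [windowFaults_add s (Nat.le_add_right a p.length) hble]
    have hw1 : windowFaults s a (a + p.length) ≤ k := by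
      apply hcons
      have : a + p.length - a = p.length := by omega
      rw [this, ha, List.take_left]
      omega
    have hw2 := ih (a + p.length) hdb
    have hlc : (q :: rest).length = rest.length + 1 := rfl
    have h2c : (p :: q :: rest).length = rest.length + 2 := rfl
    rw [h2c]
    rw [hlc] at hw2
    have hmul : k * (rest.length + 2) = k * (rest.length + 1) + k := by ring
    omega

lemma odd_le (s : PagingSchedule k r) :
    ∀ (q : List (List α)), GoodBlocks k q → ∀ a, r.drop a = q.flatten →
      oddSum q ≤ windowFaults s a r.length
  | [], _, a, _ => Nat.zero_le _
  | [p], _, a, _ => Nat.zero_le _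
  | p :: q :: rest, hg, a, ha => by
    have h1 : p ≠ [] := by cases hg with | cons h1 h2 h3 => exact h1
    have h2 : p.dedup.length = k := by cases hg with | cons h1 h2 h3 => exact h2
    have h3 : GoodBlocks k (q :: rest) := by cases hg with | cons h1 h2 h3 => exact h3
    have hrest : GoodBlocks k rest := h3.tail
    have ha' : r.drop a = (p ++ q) ++ rest.flatten := by
      rw [ha]
      simp [List.flatten_cons, List.append_assoc]
    have halen : a < r.length := by
      by_contra hc
      push_neg at hc
      rw [List.drop_eq_nil_of_le hc] at ha'
      exact h1 (List.append_eq_nil_iff.mp (List.append_eq_nil_iff.mp ha'.symm).1).1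
    have hlen : r.length - a = (p.length + q.length) + rest.flatten.length := by
      rw [← List.length_drop, ha', List.length_append, List.length_append]
    set b := a + (p.length + q.length) with hb
    have hble : b ≤ r.length := by omega
    have hwin : (r.drop a).take (b - a) = p ++ q := by
      have hba : b - a = (p ++ q).length := by rw [List.length_append]; omega
      rw [hba, ha', List.take_left]
    have hdb : r.drop b = rest.flatten := by
      have h' : (r.drop a).drop ((p ++ q).length) = rest.flatten := by
        rw [ha', List.drop_left]
      rw [List.drop_drop] at h'
      have hbeq : b = a + (p ++ q).length := by rw [List.length_append]
      rw [hbeq]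
      exact h'
    have habb : a ≤ b := by omega
    rw [windowFaults_add s habb hble]
    have hlb := window_lb s a b
    rw [hwin] at hlb
    have hcount := count_pair p q
    have hcache := s.card_le a
    have hw1 : pairNew p q ≤ windowFaults s a b := by omega
    have hw2 : oddSum rest ≤ windowFaults s b r.length := odd_le s rest hrest b hdb
    show pairNew p q + oddSum rest ≤ _
    omega

lemma nc_le {P : List (List α)} (hg : GoodBlocks k P) (hjoin : P.flatten = r)
    (s' : PagingSchedule k r) (hN : 2 ≤ P.length) :
    ncList P + 2 * k ≤ 2 * faults s' := by
  classical
  obtain _ | ⟨p, _ | ⟨q, rest⟩⟩ := P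
  · simp at hN
  · simp at hN
  have h1 : p ≠ [] := by cases hg with | cons h1 h2 h3 => exact h1
  have h2 : p.dedup.length = k := by cases hg with | cons h1 h2 h3 => exact h2
  have h3 : GoodBlocks k (q :: rest) := by cases hg with | cons h1 h2 h3 => exact h3
  have hrest : GoodBlocks k rest := h3.tail
  have hr1 : r = p ++ (q :: rest).flatten := by rw [← hjoin, List.flatten_cons]
  have hr2 : r = (p ++ q) ++ rest.flatten := by
    rw [← hjoin]; simp [List.flatten_cons, List.append_assoc]
  have hple : p.length ≤ r.length := by
    rw [hr1, List.length_append]; omega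
  have hpqle : p.length + q.length ≤ r.length := by
    rw [hr2, List.length_append, List.length_append]; omega
  -- even part
  have e1 : k ≤ windowFaults s' 0 p.length := by
    have hlb := window_lb s' 0 p.length
    have hwin : (r.drop 0).take (p.length - 0) = p := by
      rw [List.drop_zero, Nat.sub_zero, hr1, List.take_left]
    rw [hwin, s'.init, Finset.card_empty, List.card_toFinset, h2] at hlb
    omega
  have e2 : oddSum (q :: rest) ≤ windowFaults s' p.length r.length := by
    apply odd_le s' _ h3
    rw [hr1, List.drop_left]
  have heven : k + oddSum (q :: rest) ≤ faults s' := by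
    rw [faults_eq_window, windowFaults_add s' (Nat.zero_le _) hple]
    omega
  -- odd part
  have o1 : k + pairNew p q ≤ windowFaults s' 0 (p.length + q.length) := by
    have hlb := window_lb s' 0 (p.length + q.length)
    have hwin : (r.drop 0).take (p.length + q.length - 0) = p ++ q := by
      rw [List.drop_zero, Nat.sub_zero, hr2, ← List.length_append, List.take_left]
    rw [hwin, s'.init, Finset.card_empty] at hlb
    have hcount := count_pair p q
    omega
  have o2 : oddSum rest ≤ windowFaults s' (p.length + q.length) r.length := by
    apply odd_le s' _ hrest
    rw [hr2, ← List.length_append, List.drop_left]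
  have hodd : k + (pairNew p q + oddSum rest) ≤ faults s' := by
    rw [faults_eq_window, windowFaults_add s' (Nat.zero_le _) hpqle]
    omega
  have hdecomp : ncList (p :: q :: rest) = oddSum (p :: q :: rest) + oddSum (q :: rest) := by
    have := ncList_eq_odd_add (p :: q :: rest)
    simpa using this
  have hoddeq : oddSum (p :: q :: rest) = pairNew p q + oddSum rest := rfl
  omega

end Main

/-- for any conservative paging strategy `X`,
`m(k,r) ≤ 2k · cost_OPT(k,r) / cost_X(k,r)`. -/
theorem avgNew_le_conservative_ratio {α : Type*} [DecidableEq α] (r : List α)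
    (k : ℕ) (hk : 0 < k) (s : PagingSchedule k r) (hcons : Conservative s)
    (hpos : 0 < schedCost s) :
    avgNew k r ≤ 2 * (k : ℝ) * (costOpt k r : ℝ) / (schedCost s : ℝ) := by
  classical
  have hjoin : (phases k r).flatten = r := phasesAux_join hk r.length r le_rfl
  have hgood : GoodBlocks k (phases k r) := phasesAux_good hk r.length r le_rfl
  set P := phases k r with hP
  have hfs : faults s ≤ k * P.length := by
    rw [faults_eq_window]
    exact chain_faults_le s hcons P hgood 0 (by rw [List.drop_zero, hjoin])
  have hN : 2 ≤ P.length := by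
    by_contra hN'
    push_neg at hN'
    have h1 : k * P.length ≤ k := by
      calc k * P.length ≤ k * 1 := Nat.mul_le_mul_left k (by omega)
        _ = k := Nat.mul_one k
    rw [schedCost] at hpos
    omega
  have hLpos : 1 ≤ P.length - 1 := by omega
  have hcost : schedCost s ≤ k * (P.length - 1) := by
    have h1 : k * (P.length - 1) + k = k * P.length := by
      rw [← Nat.mul_succ]
      congr 1
      omega
    rw [schedCost]
    omega
  have hopt_mem : costOpt k r ∈ {c | ∃ s' : PagingSchedule k r, c = schedCost s'} :=
    Nat.sInf_mem ⟨schedCost s, s, rfl⟩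
  obtain ⟨s₀, hs₀⟩ := hopt_mem
  have hnc : ncList P + 2 * k ≤ 2 * faults s₀ := nc_le hgood hjoin s₀ hN
  have hnc2 : ncList P ≤ 2 * costOpt k r := by
    rw [hs₀, schedCost]
    omega
  have hsum : (newCounts k r).sum = ncList P := newCounts_sum_eq P
  have hnum : numPhases k r = P.length - 1 := rfl
  rw [avgNew, hsum, hnum]
  have h1 : (0:ℝ) < (schedCost s : ℝ) := by exact_mod_cast hpos
  have h2 : (0:ℝ) < ((P.length - 1 : ℕ) : ℝ) := by exact_mod_cast hLpos
  rw [div_le_div_iff₀ h2 h1]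
  have A : (ncList P : ℝ) ≤ 2 * (costOpt k r : ℝ) := by exact_mod_cast hnc2
  have B : ((schedCost s : ℕ) : ℝ) ≤ (k : ℝ) * ((P.length - 1 : ℕ) : ℝ) := by
    exact_mod_cast hcost
  have hO : (0:ℝ) ≤ (costOpt k r : ℝ) := Nat.cast_nonneg _
  nlinarith [mul_le_mul_of_nonneg_right A h1.le,
    mul_le_mul_of_nonneg_left B (by positivity : (0:ℝ) ≤ 2 * (costOpt k r : ℝ))]
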